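/- The equation 5^x - 2^y = 3 has exactly one solution in non-negative integers, namely (x, y) = (1, 1). -/

import Mathlib

theorem five_pow_sub_two_pow_eq_three (x y : ℕ) :
    (5:ℤ)^x - 2^y = 3 ↔ x = 1 ∧ y = 1 := by
  constructor
  · intro h
    match y with
    | 0 =>
      exfalso
      have hx : (5:ℤ)^x = 4 := by simpa using by linarith
      have h2 : (5:ℤ)^x % 2 = 1 := by
        have : (5:ℤ)^x ≡ 1^x [ZMOD 2] := Int.ModEq.pow x (by decide)
        simpa [Int.ModEq] using this
      omega
    | 1 =>
      have hx : (5:ℤ)^x = 5^1 := by push_cast at h ⊢; linarith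
      have : ((5:ℕ)^x : ℤ) = ((5:ℕ)^1 : ℤ) := by push_cast; linarith
      have hx' : (5:ℕ)^x = 5^1 := by exact_mod_cast this
      exact ⟨Nat.pow_right_injective (by norm_num) hx', rfl⟩
    | (y+2) =>
      exfalso
      have h4 : (5:ℤ)^x % 4 = 1 := by
        have : (5:ℤ)^x ≡ 1^x [ZMOD 4] := Int.ModEq.pow x (by decide)
        simpa [Int.ModEq] using this
      have h2 : (2:ℤ)^(y+2) = 4 * 2^y := by ring
      have h2m : (4:ℤ) * 2^y % 4 = 0 := by
        simp [Int.mul_emod_right]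
      rw [h2] at h
      omega
  · rintro ⟨rfl, rfl⟩
    norm_num
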